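/- arXiv:2512.21469 — 2 statements merged into one kernel-verified Lean document; each statement's English description precedes it below -/
import Mathlib

section
/- Let A ∈ ℝ^{n×n} be invertible with eigenvector matrix Ψ putting A in block upper-triangular (Jordan) form Λ = blkdiag(Λ_m, Λ_⊥) where Λ_m ∈ ℂ^{m×m} is invertible. If U[0] = Ψ [K_{m,r}; K_⊥] has orthonormal columns with rank(K_{m,r}) = r, then for every k the iterate U[k] of the natural power method can be written U[k] = Ψ [K_{m,r}^{(k)}; K_⊥^{(k)}] with rank(K_{m,r}^{(k)}) = r; i.e., the set V_{m,r} is forward invariant. -/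
open Matrix

open Classical in
noncomputable def invSqrt {q : Type*} [Fintype q] [DecidableEq q]
    (M : Matrix q q ℝ) : Matrix q q ℝ :=
  if h : M.PosSemidef then
    ((h.1.eigenvectorUnitary : Matrix q q ℝ) * diagonal (Real.sqrt ∘ h.1.eigenvalues) *
      (star h.1.eigenvectorUnitary : Matrix q q ℝ))⁻¹ else 0

/-- The natural power method iteration `U[k+1] = A U[k] (U[k]ᵀ Aᵀ A U[k])^{-1/2}`. -/
noncomputable def npmSeq {N q : Type*} [Fintype N] [Fintype q] [DecidableEq q]
    (A : Matrix N N ℝ) (U0 : Matrix N q ℝ) : ℕ → Matrix N q ℝ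
  | 0 => U0
  | k + 1 => A * npmSeq A U0 k * invSqrt ((npmSeq A U0 k)ᵀ * Aᵀ * A * npmSeq A U0 k)

lemma posDef_transpose_mul_self_aux3 {N q : Type*} [Fintype N] [Fintype q]
    (B : Matrix N q ℝ) (hB : Function.Injective B.mulVec) :
    (Bᵀ * B).PosDef := by
  refine PosDef.of_dotProduct_mulVec_pos ?_ (fun x hx => ?_)
  · have := (posSemidef_conjTranspose_mul_self B).1
    rwa [conjTranspose_eq_transpose_of_trivial] at this
  · have hy : B *ᵥ x ≠ 0 := fun h => hx (hB (by simpa using h))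
    have : star x ⬝ᵥ ((Bᵀ * B) *ᵥ x) = (B *ᵥ x) ⬝ᵥ (B *ᵥ x) := by
      rw [← mulVec_mulVec, star_trivial, dotProduct_mulVec, vecMul_transpose]
    rw [this]
    have := dotProduct_star_self_pos_iff (v := B *ᵥ x) |>.2 hy
    simpa using this

lemma isUnit_invSqrt_det_aux3 {q : Type*} [Fintype q] [DecidableEq q]
    {M : Matrix q q ℝ} (hM : M.PosDef) : IsUnit (invSqrt M).det := by
  rw [invSqrt, dif_pos hM.posSemidef]
  apply Matrix.isUnit_nonsing_inv_det
  rw [det_mul, det_mul, det_diagonal]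
  refine IsUnit.mul (IsUnit.mul ((Matrix.isUnit_iff_isUnit_det _).mp Unitary.isUnit_coe) ?_)
    ((Matrix.isUnit_iff_isUnit_det _).mp Unitary.isUnit_coe.star)
  exact isUnit_iff_ne_zero.mpr (Finset.prod_ne_zero_iff.mpr fun i _ =>
    (Real.sqrt_pos.mpr (hM.eigenvalues_pos i)).ne')

/-- Forward invariance of the set `V_{m,r}` under the natural power method. -/
theorem stmt_3 {m p r : ℕ}
    (A : Matrix (Fin m ⊕ Fin p) (Fin m ⊕ Fin p) ℝ) (hA : IsUnit A.det)
    (Ψ : Matrix (Fin m ⊕ Fin p) (Fin m ⊕ Fin p) ℂ) (hΨ : IsUnit Ψ.det)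
    (Λm : Matrix (Fin m) (Fin m) ℂ) (hΛm : IsUnit Λm.det)
    (Λp : Matrix (Fin p) (Fin p) ℂ)
    (hblk : Ψ⁻¹ * A.map (fun x => (x : ℂ)) * Ψ = Matrix.fromBlocks Λm 0 0 Λp)
    (K : Matrix (Fin m) (Fin r) ℂ) (Kp : Matrix (Fin p) (Fin r) ℂ)
    (hrank : K.rank = r)
    (U0 : Matrix (Fin m ⊕ Fin p) (Fin r) ℝ) (hU0orth : U0ᵀ * U0 = 1)
    (hU0 : U0.map (fun x => (x : ℂ)) = Ψ * Matrix.fromRows K Kp) :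
    ∀ k : ℕ, ∃ (Kk : Matrix (Fin m) (Fin r) ℂ) (Kpk : Matrix (Fin p) (Fin r) ℂ),
      (npmSeq A U0 k).map (fun x => (x : ℂ)) = Ψ * Matrix.fromRows Kk Kpk ∧
      Kk.rank = r := by
  have hAunit : IsUnit A := (Matrix.isUnit_iff_isUnit_det A).mpr hA
  have hAinj : Function.Injective A.mulVec := Matrix.mulVec_injective_iff_isUnit.mpr hAunit
  -- A.map ℂ * Ψ = Ψ * fromBlocks
  have hAΨ : A.map (fun x => (x : ℂ)) * Ψ = Ψ * Matrix.fromBlocks Λm 0 0 Λp := by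
    rw [← hblk, ← Matrix.mul_assoc, ← Matrix.mul_assoc, Matrix.mul_nonsing_inv _ hΨ,
      Matrix.one_mul]
  -- strengthened induction
  suffices H : ∀ k : ℕ, Function.Injective (npmSeq A U0 k).mulVec ∧
      ∃ (Kk : Matrix (Fin m) (Fin r) ℂ) (Kpk : Matrix (Fin p) (Fin r) ℂ),
      (npmSeq A U0 k).map (fun x => (x : ℂ)) = Ψ * Matrix.fromRows Kk Kpk ∧
      Kk.rank = r by
    exact fun k => (H k).2
  intro k
  induction k with
  | zero =>
    refine ⟨?_, K, Kp, hU0, hrank⟩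
    show Function.Injective U0.mulVec
    intro a b hab
    have h2 : U0ᵀ *ᵥ (U0 *ᵥ a) = U0ᵀ *ᵥ (U0 *ᵥ b) := by rw [hab]
    simpa [mulVec_mulVec, hU0orth] using h2
  | succ k ih =>
    obtain ⟨hinj, Kk, Kpk, hmap, hrk⟩ := ih
    set U := npmSeq A U0 k with hU
    set B := A * U with hB
    have hBinj : Function.Injective B.mulVec := by
      intro a b hab
      apply hinj
      apply hAinj
      simpa [hB, ← mulVec_mulVec] using hab
    have hM : (Uᵀ * Aᵀ * A * U).PosDef := by
      have : Uᵀ * Aᵀ * A * U = Bᵀ * B := by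
        rw [hB, transpose_mul, Matrix.mul_assoc, Matrix.mul_assoc]
      rw [this]
      exact posDef_transpose_mul_self_aux3 B hBinj
    set C := invSqrt (Uᵀ * Aᵀ * A * U) with hC
    have hCdet : IsUnit C.det := isUnit_invSqrt_det_aux3 hM
    have hCunit : IsUnit C := (Matrix.isUnit_iff_isUnit_det C).mpr hCdet
    have hCinj : Function.Injective C.mulVec := Matrix.mulVec_injective_iff_isUnit.mpr hCunit
    have hstep : npmSeq A U0 (k + 1) = A * U * C := rfl
    constructor
    · intro a b hab
      apply hCinj; apply hinj; apply hAinj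
      simpa [hstep, ← mulVec_mulVec] using hab
    · refine ⟨Λm * Kk * C.map (fun x => (x : ℂ)),
        Λp * Kpk * C.map (fun x => (x : ℂ)), ?_, ?_⟩
      · have hmm : ∀ (X Y : Matrix (Fin m ⊕ Fin p) (Fin m ⊕ Fin p) ℝ)
            (Z : Matrix (Fin m ⊕ Fin p) (Fin r) ℝ), True := fun _ _ _ => trivial
        have := Complex.ofRealHom
        calc (A * U * C).map (fun x => (x : ℂ))
            = A.map (fun x => (x : ℂ)) * U.map (fun x => (x : ℂ)) *
              C.map (fun x => (x : ℂ)) := by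
              simp only [show (fun x : ℝ => (x : ℂ)) = ⇑Complex.ofRealHom from rfl,
                Matrix.map_mul]
          _ = A.map (fun x => (x : ℂ)) * (Ψ * Matrix.fromRows Kk Kpk) *
              C.map (fun x => (x : ℂ)) := by rw [hmap]
          _ = Ψ * Matrix.fromBlocks Λm 0 0 Λp * Matrix.fromRows Kk Kpk *
              C.map (fun x => (x : ℂ)) := by rw [← Matrix.mul_assoc, hAΨ]
          _ = Ψ * Matrix.fromRows (Λm * Kk * C.map (fun x => (x : ℂ)))
              (Λp * Kpk * C.map (fun x => (x : ℂ))) := by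
              rw [Matrix.mul_assoc Ψ, Matrix.fromBlocks_mul_fromRows, Matrix.mul_assoc,
                Matrix.fromRows_mul]
              simp [Matrix.mul_assoc]
      · have hCmap : IsUnit (C.map (fun x => (x : ℂ))).det := by
          have : (C.map (fun x => (x : ℂ))).det = Complex.ofRealHom C.det := by
            rw [RingHom.map_det]; rfl
          rw [this]
          exact hCdet.map Complex.ofRealHom
        rw [Matrix.rank_mul_eq_left_of_isUnit_det _ _ hCmap,
          Matrix.rank_mul_eq_right_of_isUnit_det _ _ hΛm, hrk]
end

section
/- Under the hypotheses of the previous two statements, if the pair (A, C) is observable (the observability Gramian Σ_{i=0}^{n-1}(A⊤)^i C⊤C A^i is positive definite) and Ū spans an A-invariant subspace, then the reduced pair (A_Ū, C_Ū) is observable (its r×r observability Gramian is positive definite). -/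
open Matrix Finset Polynomial

lemma aux_sum_mulVec {ι m k : Type*} [Fintype k] (s : Finset ι)
    (M : ι → Matrix m k ℝ) (x : k → ℝ) :
    (∑ i ∈ s, M i) *ᵥ x = ∑ i ∈ s, M i *ᵥ x := by
  ext j
  simp only [Matrix.mulVec, dotProduct, Matrix.sum_apply, Finset.sum_apply, Finset.sum_mul]
  rw [Finset.sum_comm]

lemma aux_dotProduct_sum {ι k : Type*} [Fintype k] (s : Finset ι)
    (x : k → ℝ) (v : ι → k → ℝ) :
    x ⬝ᵥ (∑ i ∈ s, v i) = ∑ i ∈ s, x ⬝ᵥ v i := by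
  simp only [dotProduct, Finset.sum_apply, Finset.mul_sum]
  rw [Finset.sum_comm]

/-- Observability of `(A, C)` implies observability of the reduced pair
`(A_Ū, C_Ū)` for an `A`-invariant subspace spanned by `Ū`. -/
theorem stmt_13 {n r p : ℕ} (A : Matrix (Fin n) (Fin n) ℝ)
    (C : Matrix (Fin p) (Fin n) ℝ)
    (U : Matrix (Fin n) (Fin r) ℝ) (hUorth : Uᵀ * U = 1)
    (hinv : (1 - U * Uᵀ) * A * U = 0)
    (hobs : (∑ i ∈ range n, (Aᵀ) ^ i * Cᵀ * C * A ^ i).PosDef) :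
    (∑ i ∈ range r,
      ((Uᵀ * A * U)ᵀ) ^ i * (C * U)ᵀ * (C * U) * (Uᵀ * A * U) ^ i).PosDef := by
  set B := Uᵀ * A * U with hB
  set D := C * U with hD
  clear_value B D
  have hAU : A * U = U * B := by
    have h : A * U - U * (Uᵀ * A * U) = 0 := by
      have := hinv
      simp only [Matrix.sub_mul, Matrix.one_mul, Matrix.mul_assoc] at this ⊢
      exact this
    rw [sub_eq_zero] at h
    rw [h, hB]
  have hpow : ∀ i : ℕ, A ^ i * U = U * B ^ i := by
    intro i
    induction i with
    | zero => simp
    | succ k ih =>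
      rw [pow_succ, pow_succ, Matrix.mul_assoc, hAU, ← Matrix.mul_assoc, ih,
        Matrix.mul_assoc]
  -- each term rewritten
  have hterm : ∀ i : ℕ, (Bᵀ) ^ i * Dᵀ * D * B ^ i = (D * B ^ i)ᵀ * (D * B ^ i) := by
    intro i
    simp only [Matrix.transpose_mul, Matrix.transpose_pow, Matrix.mul_assoc]
  -- quadratic form of each term
  have hquad : ∀ (i : ℕ) (x : Fin r → ℝ),
      x ⬝ᵥ (((Bᵀ) ^ i * Dᵀ * D * B ^ i) *ᵥ x) = ((D * B ^ i) *ᵥ x) ⬝ᵥ ((D * B ^ i) *ᵥ x) := by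
    intro i x
    rw [hterm, ← Matrix.mulVec_mulVec, Matrix.dotProduct_mulVec, Matrix.vecMul_transpose]
  refine posDef_iff_dotProduct_mulVec.mpr ⟨?_, ?_⟩
  · -- Hermitian
    have : (∑ i ∈ range r, (Bᵀ) ^ i * Dᵀ * D * B ^ i)ᵀ
        = ∑ i ∈ range r, (Bᵀ) ^ i * Dᵀ * D * B ^ i := by
      rw [Matrix.transpose_sum]
      refine Finset.sum_congr rfl fun i _ => ?_
      rw [hterm, Matrix.transpose_mul, Matrix.transpose_transpose, ← hterm]
    simpa [Matrix.IsHermitian, Matrix.conjTranspose_eq_transpose_of_trivial] using this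
  · intro x hx
    -- vanishing of the first r terms implies vanishing of all
    by_contra hle
    push_neg at hle
    have hsum_nonneg : ∀ i ∈ range r, (0:ℝ) ≤ x ⬝ᵥ (((Bᵀ) ^ i * Dᵀ * D * B ^ i) *ᵥ x) := by
      intro i _
      rw [hquad]
      exact Finset.sum_nonneg fun j _ => mul_self_nonneg _
    have hstar : star x = x := by simp
    rw [hstar, aux_sum_mulVec, aux_dotProduct_sum] at hle
    have hzero : ∀ i ∈ range r, x ⬝ᵥ (((Bᵀ) ^ i * Dᵀ * D * B ^ i) *ᵥ x) = 0 := by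
      intro i hi
      have hsle : ∑ i ∈ range r, x ⬝ᵥ (((Bᵀ) ^ i * Dᵀ * D * B ^ i) *ᵥ x) ≤ 0 := hle
      have := (Finset.sum_eq_zero_iff_of_nonneg hsum_nonneg).mp
        (le_antisymm hsle (Finset.sum_nonneg hsum_nonneg))
      exact this i hi
    have hvec0 : ∀ i < r, (D * B ^ i) *ᵥ x = 0 := by
      intro i hi
      have h0 := hzero i (Finset.mem_range.mpr hi)
      rw [hquad] at h0
      exact (dotProduct_self_eq_zero).mp h0
    -- r must be positive since x ≠ 0
    rcases Nat.eq_zero_or_pos r with hr | hr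
    · subst hr
      exact hx (funext fun j => j.elim0)
    -- Cayley–Hamilton: every power is a combination of the first r powers
    have hch : ∀ m : ℕ, B ^ m = ∑ j ∈ range r, ((X ^ m %ₘ B.charpoly).coeff j) • B ^ j := by
      intro m
      have hmonic : B.charpoly.Monic := B.charpoly_monic
      have hdeg : B.charpoly.natDegree = r := by
        rw [B.charpoly_natDegree_eq_dim, Fintype.card_fin]
      have hne1 : B.charpoly ≠ 1 := by
        intro h
        rw [h] at hdeg
        simp at hdeg
        omega
      have hlt : (X ^ m %ₘ B.charpoly).natDegree < r := by
        have := natDegree_modByMonic_lt (X ^ m : ℝ[X]) hmonic hne1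
        omega
      have : (aeval B) (X ^ m : ℝ[X]) = (aeval B) (X ^ m %ₘ B.charpoly) := by
        conv_lhs => rw [← modByMonic_add_div (X ^ m : ℝ[X]) B.charpoly]
        simp [Matrix.aeval_self_charpoly]
      calc B ^ m = (aeval B) (X ^ m : ℝ[X]) := by simp
        _ = (aeval B) (X ^ m %ₘ B.charpoly) := this
        _ = ∑ j ∈ range r, ((X ^ m %ₘ B.charpoly).coeff j) • B ^ j :=
            aeval_eq_sum_range' hlt B
    have hvecall : ∀ m : ℕ, (D * B ^ m) *ᵥ x = 0 := by
      intro m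
      rw [hch m, Matrix.mul_sum]
      rw [aux_sum_mulVec]
      refine Finset.sum_eq_zero fun j hj => ?_
      rw [Matrix.mul_smul, Matrix.smul_mulVec, hvec0 j (Finset.mem_range.mp hj),
        smul_zero]
    -- contradiction with observability of (A, C)
    have hUx : U *ᵥ x ≠ 0 := by
      intro h
      apply hx
      have : Uᵀ *ᵥ (U *ᵥ x) = x := by
        rw [Matrix.mulVec_mulVec, hUorth, Matrix.one_mulVec]
      rw [h, Matrix.mulVec_zero] at this
      exact this.symm
    have hpos := (posDef_iff_dotProduct_mulVec.mp hobs).2 hUx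
    have hstar2 : star (U *ᵥ x) = U *ᵥ x := by simp
    rw [hstar2, aux_sum_mulVec, aux_dotProduct_sum] at hpos
    have : ∀ i ∈ range n, (U *ᵥ x) ⬝ᵥ (((Aᵀ) ^ i * Cᵀ * C * A ^ i) *ᵥ (U *ᵥ x)) = 0 := by
      intro i _
      have h1 : (Aᵀ) ^ i * Cᵀ * C * A ^ i = (C * A ^ i)ᵀ * (C * A ^ i) := by
        simp only [Matrix.transpose_mul, Matrix.transpose_pow, Matrix.mul_assoc]
      rw [h1, ← Matrix.mulVec_mulVec, Matrix.dotProduct_mulVec, Matrix.vecMul_transpose]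
      have h2 : (C * A ^ i) *ᵥ (U *ᵥ x) = (D * B ^ i) *ᵥ x := by
        rw [Matrix.mulVec_mulVec, Matrix.mul_assoc, hpow, ← Matrix.mul_assoc, ← hD]
      rw [h2, hvecall i]
      simp
    rw [Finset.sum_eq_zero this] at hpos
    exact lt_irrefl 0 hpos
end
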